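/- arXiv:1201.6111 — 4 statements merged into one kernel-verified Lean document; each statement's English description precedes it below -/
import Mathlib

section
/- Let H and B be cochain complexes with linear maps ι : H → B, π : B → H and a degree -1 map h : B → B satisfying π∘ι = id_H and d∘h + h∘d = id_B − ι∘π, together with the side conditions h∘ι = 0, h∘h = 0, π∘h = 0. If B carries a unit element e for an associative product with ι(π(e)) = e, then any composite operation built from a rooted tree with at least one internal edge, whose vertex operations are the product, and which has e as one of its leaf inputs, vanishes (since the composite necessarily contains one of the compositions h∘h, h∘ι, or π∘h). -/
/-- Rooted trees whose leaves carry inputs from `H` and whose internal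
vertices are all decorated by the (associative, unital) product of `B`. -/
inductive PTree (H : Type*) where
  | leaf (x : H) : PTree H
  | node (l r : PTree H) : PTree H

namespace PTree

/-- `t.containsLeaf x` : `x` occurs as one of the leaf inputs of `t`. -/
def containsLeaf {H : Type*} : PTree H → H → Prop
  | leaf y, x => y = x
  | node l r, x => l.containsLeaf x ∨ r.containsLeaf x

def isNode {H : Type*} : PTree H → Prop
  | leaf _ => False
  | node _ _ => True

/-- Evaluation of a decorated tree inside `B`: leaves are decorated by `ι`,
internal edges by `h`, and vertices by the product of `B`. -/
noncomputable def evalB {H B : Type*} [AddCommGroup H] [Module ℂ H]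
    [Ring B] [Algebra ℂ B] (ι : H →ₗ[ℂ] B) (h : B →ₗ[ℂ] B) : PTree H → B
  | leaf x => ι x
  | node l r => h (evalB ι h l * evalB ι h r)

end PTree

/-- given linear transfer data `(ι, π, h)` between cochain complexes `H` and `B`
satisfying the side conditions, and a unit `e = 1` of the associative product of `B` with
`ι (π e) = e`, any composite operation built from a rooted tree with at least one internal edge,
all of whose vertices are decorated by the product, and which has `e` among its leaf inputs,
vanishes. -/
theorem stmt0 {H B : Type*} [AddCommGroup H] [Module ℂ H] [Ring B] [Algebra ℂ B]
    (dB : B →ₗ[ℂ] B) (dH : H →ₗ[ℂ] H)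
    (ι : H →ₗ[ℂ] B) (π : B →ₗ[ℂ] H) (h : B →ₗ[ℂ] B)
    (hdB : dB ∘ₗ dB = 0) (hdH : dH ∘ₗ dH = 0)
    (hchainι : dB ∘ₗ ι = ι ∘ₗ dH) (hchainπ : dH ∘ₗ π = π ∘ₗ dB)
    (hπι : π ∘ₗ ι = LinearMap.id)
    (hhomotopy : dB ∘ₗ h + h ∘ₗ dB = LinearMap.id - ι ∘ₗ π)
    (hhι : h ∘ₗ ι = 0) (hhh : h ∘ₗ h = 0) (hπh : π ∘ₗ h = 0)
    (hπe : ι (π 1) = 1)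
    (l r : PTree H) (hInternal : l.isNode ∨ r.isNode)
    (hcont : (PTree.node l r).containsLeaf (π 1)) :
    π (PTree.evalB ι h l * PTree.evalB ι h r) = 0 := by

  have hh0 : ∀ b, h (h b) = 0 := by
    intro b; have := DFunLike.congr_fun hhh b; simpa using this
  have hι0 : ∀ x, h (ι x) = 0 := by
    intro x; have := DFunLike.congr_fun hhι x; simpa using this
  have hπh0 : ∀ b, π (h b) = 0 := by
    intro b; have := DFunLike.congr_fun hπh b; simpa using this
  have key : ∀ t : PTree H, t.isNode → t.containsLeaf (π 1) → PTree.evalB ι h t = 0 := by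
    intro t
    induction t with
    | leaf x => intro hn; exact hn.elim
    | node a b iha ihb =>
      intro _ hc
      rcases hc with hc | hc
      · cases a with
        | leaf x =>
          have hx : x = π 1 := hc
          subst hx
          cases b with
          | leaf y => simp [PTree.evalB, hπe, hι0]
          | node c d => simp [PTree.evalB, hπe, hh0]
        | node c d =>
          rw [show PTree.evalB ι h ((PTree.node c d).node b)
              = h (PTree.evalB ι h (PTree.node c d) * PTree.evalB ι h b) from rfl,
            iha trivial hc]
          simp
      · cases b with
        | leaf y =>
          have hy : y = π 1 := hc
          subst hy
          cases a with
          | leaf x => simp [PTree.evalB, hπe, hι0]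
          | node c d => simp [PTree.evalB, hπe, hh0]
        | node c d =>
          rw [show PTree.evalB ι h (a.node (PTree.node c d))
              = h (PTree.evalB ι h a * PTree.evalB ι h (PTree.node c d)) from rfl,
            ihb trivial hc]
          simp
  rcases hcont with hc | hc
  · cases l with
    | leaf x =>
      have hx : x = π 1 := hc
      subst hx
      rcases hInternal with hi | hi
      · exact hi.elim
      · cases r with
        | leaf y => exact hi.elim
        | node c d => simp [PTree.evalB, hπe, hπh0]
    | node c d => rw [key (PTree.node c d) trivial hc]; simp
  · cases r with
    | leaf y =>
      have hy : y = π 1 := hc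
      subst hy
      rcases hInternal with hi | hi
      · cases l with
        | leaf x => exact hi.elim
        | node c d => simp [PTree.evalB, hπe, hπh0]
      · exact hi.elim
    | node c d => rw [key (PTree.node c d) trivial hc]; simp
end

section
/- Let V be a complex inner product space with a self-adjoint operator Δ (the Laplacian), H = ker Δ, and let G be the Green's operator: G = 0 on H and G = Δ⁻¹ on the orthogonal complement of H. Let d, d* be adjoint operators with Δ = d d* + d* d, d² = 0, (d*)² = 0, and suppose d, d* commute with G. Define h = d* G, let ι : H → V be the inclusion and π : V → H the orthogonal projection. Then π∘ι = id_H, d∘h + h∘d = id_V − ι∘π, h∘ι = 0, h∘h = 0, and π∘h = 0. -/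
open LinearMap

lemma harmonic_closed {V : Type*} [NormedAddCommGroup V] [InnerProductSpace ℂ V]
    [FiniteDimensional ℂ V] (d : V →ₗ[ℂ] V) (Δ : V →ₗ[ℂ] V)
    (hΔ : Δ = d ∘ₗ adjoint d + adjoint d ∘ₗ d)
    {y : V} (hy : y ∈ ker Δ) : d y = 0 ∧ adjoint d y = 0 := by
  have hy0 : Δ y = 0 := hy
  have key : (inner ℂ (d y) (d y) : ℂ) + inner ℂ (adjoint d y) (adjoint d y) = 0 := by
    have h1 : (inner ℂ (Δ y) y : ℂ) = 0 := by rw [hy0]; simp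
    rw [hΔ] at h1
    simp only [LinearMap.add_apply, comp_apply, inner_add_left] at h1
    rw [adjoint_inner_left, ← adjoint_inner_right d] at h1
    linear_combination h1
  have h2 : (‖d y‖ : ℝ)^2 + ‖adjoint d y‖^2 = 0 := by
    have := congrArg Complex.re key
    simpa [inner_self_eq_norm_sq_to_K, pow_two] using this
  constructor <;> rw [← norm_eq_zero] <;> nlinarith [sq_nonneg ‖d y‖, sq_nonneg ‖adjoint d y‖, norm_nonneg (d y), norm_nonneg (adjoint d y)]

/-- Hodge-theoretic transfer data.  `V` a complex inner product space,
`Δ = d d* + d* d` the Laplacian, `H = ker Δ` the harmonic subspace, `G` the Green's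
operator (zero on `H`, inverse of `Δ` on `Hᗮ`) commuting with `d` and `d*`, and
`h = d* G`.  Then `(ι, π, h)` (inclusion, orthogonal projection, homotopy) satisfy
`π ∘ ι = id`, `d h + h d = id − ι π`, and the side conditions `h ι = h² = π h = 0`. -/
theorem stmt1 {V : Type*} [NormedAddCommGroup V] [InnerProductSpace ℂ V]
    [FiniteDimensional ℂ V]
    (d : V →ₗ[ℂ] V) (hd2 : d ∘ₗ d = 0)
    (hdstar2 : adjoint d ∘ₗ adjoint d = 0)
    (Δ : V →ₗ[ℂ] V) (hΔ : Δ = d ∘ₗ adjoint d + adjoint d ∘ₗ d)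
    (G : V →ₗ[ℂ] V)
    (hGker : ∀ x ∈ ker Δ, G x = 0)
    (hGmem : ∀ x ∈ (ker Δ : Submodule ℂ V)ᗮ, G x ∈ (ker Δ : Submodule ℂ V)ᗮ)
    (hGinv : ∀ x ∈ (ker Δ : Submodule ℂ V)ᗮ, Δ (G x) = x ∧ G (Δ x) = x)
    (hGd : G ∘ₗ d = d ∘ₗ G) (hGdstar : G ∘ₗ adjoint d = adjoint d ∘ₗ G)
    (h : V →ₗ[ℂ] V) (hh : h = adjoint d ∘ₗ G) :
    (∀ y : ker Δ, Submodule.orthogonalProjection (ker Δ) ((y : V)) = y)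
    ∧ (∀ x : V, d (h x) + h (d x) = x - (Submodule.orthogonalProjection (ker Δ) x : V))
    ∧ (∀ y : ker Δ, h (y : V) = 0)
    ∧ h ∘ₗ h = 0
    ∧ (∀ x : V, Submodule.orthogonalProjection (ker Δ) (h x) = 0) := by
  have hrange : ∀ x : V, h x ∈ (ker Δ : Submodule ℂ V)ᗮ := by
    intro x
    rw [Submodule.mem_orthogonal]
    intro y hy
    have hdy : d y = 0 := (harmonic_closed d Δ hΔ hy).1
    rw [hh]
    simp only [comp_apply]
    rw [adjoint_inner_right, hdy, inner_zero_left]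
  refine ⟨?_, ?_, ?_, ?_, ?_⟩
  · intro y; exact Submodule.orthogonalProjectionOnto_mem_subspace_eq_self y
  · intro x
    set p : V := (Submodule.orthogonalProjection (ker Δ) x : V)
    have hpmem : p ∈ ker Δ := (Submodule.orthogonalProjection (ker Δ) x).2
    have hqmem : x - p ∈ (ker Δ : Submodule ℂ V)ᗮ :=
      Submodule.sub_starProjection_mem_orthogonal x
    have hGx : G x = G (x - p) := by
      have : G x = G (x - p) + G p := by rw [← map_add]; congr 1; abel
      rw [this, hGker p hpmem, add_zero]
    have hGdx : h (d x) = adjoint d (d (G (x - p))) := by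
      rw [hh]
      simp only [comp_apply]
      have := congrFun (congrArg DFunLike.coe hGd) x
      simp only [comp_apply] at this
      rw [this, hGx]
    rw [hGdx, hh]
    simp only [comp_apply]
    rw [hGx]
    have := (hGinv (x - p) hqmem).1
    rw [hΔ] at this
    simpa using this
  · intro y
    rw [hh]
    simp only [comp_apply]
    rw [hGker y y.2, map_zero]
  · rw [hh]
    ext x
    simp only [comp_apply, LinearMap.zero_apply]
    have := congrFun (congrArg DFunLike.coe hGdstar) (G x)
    simp only [comp_apply] at this
    rw [this]
    have := congrFun (congrArg DFunLike.coe hdstar2) (G (G x))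
    simp only [comp_apply, LinearMap.zero_apply] at this
    exact this
  · intro x
    have := hrange x
    rw [Submodule.orthogonalProjectionOnto_apply_of_mem_orthogonal this]
end

section
/- Let n ≤ 4. Any k-ary higher homotopy operation (k ≥ 3, total degree ≥ −2k+5) with exactly one argument in the formal part (total degree ≥ n) and k−1 arguments in the primitive part of total degree ≥ 2 has output of total degree ≥ n + 3. Since the maximum possible total degree in H is 2n and a nonzero output requires degree ≤ 2n − ε for the relevant targets, and n + 3 > 2n − 2 for n < 5, all such operations vanish except possibly in top degree (n,n), where only the product is nonzero. -/
/-- hypersurface footprint in dimension `n ≤ 4`.  A `k`-ary higher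
homotopy operation (`k ≥ 3`, total degree `D ≥ -2k+5`) with exactly one argument in
the formal part (total degree `≥ n`) and `k-1` primitive arguments of total degree
`≥ 2` has output of total degree `≥ n+3 > 2n-2`; hence its output cannot lie in any
component of degree `≤ 2n-2`, and all such operations vanish (except possibly in top
degree `(n,n)`, where only the product is nonzero). -/
theorem stmt9 {W : Type*} [AddCommGroup W] [Module ℂ W]
    (n : ℤ) (hn : n ≤ 4) (H : ℤ → Submodule ℂ W)
    (hdisj : ∀ a b : ℤ, a ≠ b → ∀ w : W, w ∈ H a → w ∈ H b → w = 0)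
    (k : ℕ) (hk : 3 ≤ k) (D : ℤ) (hD : -2 * (k : ℤ) + 5 ≤ D)
    (f : (Fin k → W) → W)
    (hf : ∀ (d : Fin k → ℤ) (x : Fin k → W), (∀ i, x i ∈ H (d i)) →
      f x ∈ H ((∑ i, d i) + D))
    (d : Fin k → ℤ) (i₀ : Fin k) (hformal : n ≤ d i₀)
    (hprim : ∀ i, i ≠ i₀ → 2 ≤ d i)
    (x : Fin k → W) (hx : ∀ i, x i ∈ H (d i))
    (m : ℤ) (hm : m ≤ 2 * n - 2) (hout : f x ∈ H m) :
    f x = 0 := by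
  have hsum : n + 2 * ((k : ℤ) - 1) ≤ ∑ i, d i := by
    have h1 : ∑ i, d i = d i₀ + ∑ i ∈ Finset.univ.erase i₀, d i := by
      rw [Finset.add_sum_erase _ _ (Finset.mem_univ i₀)]
    have h2 : ∀ i ∈ Finset.univ.erase i₀, (2 : ℤ) ≤ d i := fun i hi =>
      hprim i (Finset.mem_erase.mp hi).1
    have h3 : (Finset.univ.erase i₀).card = k - 1 := by
      rw [Finset.card_erase_of_mem (Finset.mem_univ i₀), Finset.card_univ, Fintype.card_fin]
    have h4 : ((k : ℤ) - 1) * 2 ≤ ∑ i ∈ Finset.univ.erase i₀, d i := by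
      have := Finset.card_nsmul_le_sum (Finset.univ.erase i₀) d 2 h2
      rw [h3] at this
      have hk1 : (1:ℕ) ≤ k := by omega
      push_cast [h3] at this ⊢
      simpa [nsmul_eq_mul, Nat.cast_sub hk1] using this
    omega
  have hkey := hf d x hx
  have hne : (∑ i, d i) + D ≠ m := by omega
  exact hdisj _ _ hne _ hkey hout
end

section
/- Let (ι, π, h) be linear transfer data between a cochain complex B with unit element e and its cohomology H, satisfying the side conditions, with ι([e]) = e. Then in the transferred homotopy structure, every transferred operation corresponding to a tree with at least one internal edge vanishes whenever [e] is one of its arguments; the only nonvanishing operation with argument [e] is the binary product, which acts as the identity: [e]·x = x. -/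
/-- Rooted trees with leaves decorated by inputs from `H` and internal vertices
decorated either by the product (`isProd = true`) or the bracket of a BV-algebra. -/
inductive TTree (H : Type*) where
  | leaf (x : H) : TTree H
  | node (isProd : Bool) (l r : TTree H) : TTree H

namespace TTree

def containsLeaf {H : Type*} : TTree H → H → Prop
  | leaf y, x => y = x
  | node _ l r, x => l.containsLeaf x ∨ r.containsLeaf x

def isNode {H : Type*} : TTree H → Prop
  | leaf _ => False
  | node _ _ _ => True

/-- Evaluation inside `B`: leaves decorated by `ι`, internal edges by `h`,
vertices by the product or bracket of `B`. -/
noncomputable def evalB {H B : Type*} [AddCommGroup H] [Module ℂ H]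
    [Ring B] [Algebra ℂ B] (ι : H →ₗ[ℂ] B) (h : B →ₗ[ℂ] B)
    (br : B →ₗ[ℂ] B →ₗ[ℂ] B) : TTree H → B
  | leaf x => ι x
  | node b l r =>
      h (if b then evalB ι h br l * evalB ι h br r
         else br (evalB ι h br l) (evalB ι h br r))

end TTree

/-- let `(ι, π, h)` be linear transfer data satisfying the side conditions
between a BV-algebra `B` with unit `e = 1` (bracket with `e` vanishes, product with `e` is
the identity) and its cohomology `H`, with `ι([e]) = e`.  Then every transferred operation
whose tree has at least one internal edge vanishes whenever `[e] = π(1)` is one of its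
arguments, and the only nonvanishing operation with argument `[e]` is the binary product,
which acts as the identity: `[e]·x = x`. -/
theorem stmt18 {H B : Type*} [AddCommGroup H] [Module ℂ H] [Ring B] [Algebra ℂ B]
    (ι : H →ₗ[ℂ] B) (π : B →ₗ[ℂ] H) (h : B →ₗ[ℂ] B)
    (hπι : π ∘ₗ ι = LinearMap.id)
    (hhι : h ∘ₗ ι = 0) (hhh : h ∘ₗ h = 0) (hπh : π ∘ₗ h = 0)
    (br : B →ₗ[ℂ] B →ₗ[ℂ] B)
    (hbrl : ∀ x : B, br 1 x = 0) (hbrr : ∀ x : B, br x 1 = 0)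
    (hπe : ι (π 1) = 1) :
    (∀ (b : Bool) (l r : TTree H), (l.isNode ∨ r.isNode) →
      (TTree.node b l r).containsLeaf (π 1) →
      π (if b then TTree.evalB ι h br l * TTree.evalB ι h br r
         else br (TTree.evalB ι h br l) (TTree.evalB ι h br r)) = 0)
    ∧ (∀ x : H, π (ι (π 1) * ι x) = x) := by
  have hι0 : ∀ x : H, h (ι x) = 0 := fun x => DFunLike.congr_fun hhι x
  have hh0 : ∀ x : B, h (h x) = 0 := fun x => DFunLike.congr_fun hhh x
  have hπh0 : ∀ x : B, π (h x) = 0 := fun x => DFunLike.congr_fun hπh x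
  have hπι0 : ∀ x : H, π (ι x) = x := fun x => DFunLike.congr_fun hπι x
  -- evalB of any tree is either ι of a leaf or h of something
  have hform : ∀ t : TTree H, t.isNode → h (TTree.evalB ι h br t) = 0 := by
    intro t ht
    cases t with
    | leaf x => exact absurd ht (by simp [TTree.isNode])
    | node b l r => exact hh0 _
  have hformL : ∀ t : TTree H, h (TTree.evalB ι h br t) = 0 := by
    intro t
    cases t with
    | leaf x => exact hι0 x
    | node b l r => exact hh0 _
  -- any node containing leaf π 1 evaluates to 0
  have hzero : ∀ t : TTree H, t.isNode → t.containsLeaf (π 1) →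
      TTree.evalB ι h br t = 0 := by
    intro t
    induction t with
    | leaf x => intro ht; exact absurd ht (by simp [TTree.isNode])
    | node b l r ihl ihr =>
      intro _ hc
      rcases hc with hc | hc
      · cases l with
        | leaf y =>
          have hy : y = π 1 := hc
          subst hy
          simp only [TTree.evalB, hπe]
          cases b with
          | true => simp only [if_true]; rw [one_mul]; exact hformL r
          | false => simp [hbrl]
        | node b' l' r' =>
          have h0 : TTree.evalB ι h br (TTree.node b' l' r') = 0 :=
            ihl trivial hc
          simp only [TTree.evalB] at h0 ⊢
          rw [h0]
          cases b with
          | true => simp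
          | false => simp
      · cases r with
        | leaf y =>
          have hy : y = π 1 := hc
          subst hy
          simp only [TTree.evalB, hπe]
          cases b with
          | true => simp only [if_true]; rw [mul_one]; exact hformL l
          | false => simp [hbrr]
        | node b' l' r' =>
          have h0 : TTree.evalB ι h br (TTree.node b' l' r') = 0 :=
            ihr trivial hc
          simp only [TTree.evalB] at h0 ⊢
          rw [h0]
          cases b with
          | true => simp
          | false => simp
  constructor
  · intro b l r hnode hc
    rcases hc with hc | hc
    · cases l with
      | leaf y =>
        have hy : y = π 1 := hc
        subst hy
        have hr : r.isNode := by
          rcases hnode with hn | hn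
          · exact absurd hn (by simp [TTree.isNode])
          · exact hn
        cases r with
        | leaf x => exact absurd hr (by simp [TTree.isNode])
        | node b' l' r' =>
          simp only [TTree.evalB, hπe]
          cases b with
          | true => simp only [if_true]; rw [one_mul]; exact hπh0 _
          | false => simp [hbrl]
      | node b' l' r' =>
        have h0 := hzero (TTree.node b' l' r') trivial hc
        rw [h0]
        cases b with
        | true => simp
        | false => simp
    · cases r with
      | leaf y =>
        have hy : y = π 1 := hc
        subst hy
        have hl : l.isNode := by
          rcases hnode with hn | hn
          · exact hn
          · exact absurd hn (by simp [TTree.isNode])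
        cases l with
        | leaf x => exact absurd hl (by simp [TTree.isNode])
        | node b' l' r' =>
          simp only [TTree.evalB, hπe]
          cases b with
          | true => simp only [if_true]; rw [mul_one]; exact hπh0 _
          | false => simp [hbrr]
      | node b' l' r' =>
        have h0 := hzero (TTree.node b' l' r') trivial hc
        rw [h0]
        cases b with
        | true => simp
        | false => simp
  · intro x
    rw [hπe, one_mul, hπι0]
end
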